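/- arXiv:2404.04795 — 4 statements merged into one kernel-verified Lean document; each statement's English description precedes it below -/
import Mathlib

section
/- Let a_1, ..., a_n be distinct reals, let x1 ≤ x* < x2 be indices, and suppose every increasing subsequence in the index range [x1, x2] has length at most some bound. Define L(α) as the minimum peak over increasing subsequences of length α with indices in [x1, x*], and R(β) as the maximum base over increasing subsequences of length β with indices in (x*, x2] (both defined only when such subsequences exist). Then the length of the longest increasing subsequence of (a_{x1}, ..., a_{x2}) equals the maximum of: (i) the largest α for which L(α) is defined, (ii) the largest β for which R(β) is defined, and (iii) max{α + β : L(α) and R(β) are both defined and L(α) < R(β)}. -/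
def IncSub (a : ℕ → ℝ) (lo hi : ℕ) (l : List ℕ) : Prop :=
  l.Chain' (· < ·) ∧ (∀ i ∈ l, lo ≤ i ∧ i ≤ hi) ∧ (l.map a).Chain' (· < ·)

/-- `LPeak a x1 xs α v`: among increasing subsequences of length `α` with indices in
`[x1, xs]`, the minimum possible peak (last value) exists and equals `v`. -/
def LPeak (a : ℕ → ℝ) (x1 xs : ℕ) (α : ℕ) (v : ℝ) : Prop :=
  IsLeast {v' | ∃ l i, IncSub a x1 xs l ∧ l.length = α ∧ l.getLast? = some i ∧ v' = a i} v

/-- `RBase a xs x2 β v`: among increasing subsequences of length `β` with indices in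
`(xs, x2]`, the maximum possible base (first value) exists and equals `v`. -/
def RBase (a : ℕ → ℝ) (xs x2 : ℕ) (β : ℕ) (v : ℝ) : Prop :=
  IsGreatest {v' | ∃ l i, IncSub a (xs + 1) x2 l ∧ l.length = β ∧ l.head? = some i ∧ v' = a i} v

lemma incSub_mono {a : ℕ → ℝ} {lo hi lo' hi' : ℕ} (h1 : lo' ≤ lo) (h2 : hi ≤ hi') {l : List ℕ}
    (h : IncSub a lo hi l) : IncSub a lo' hi' l :=
  ⟨h.1, fun i hi2 => ⟨h1.trans (h.2.1 i hi2).1, (h.2.1 i hi2).2.trans h2⟩, h.2.2⟩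

lemma exists_isLeast_of_finite {s : Set ℝ} (h : s.Finite) (hn : s.Nonempty) :
    ∃ v, IsLeast s v :=
  ⟨h.toFinset.min' (by simpa using hn), by
    constructor
    · simpa using h.toFinset.min'_mem (by simpa using hn)
    · intro x hx; exact Finset.min'_le _ _ (by simpa using hx)⟩

lemma exists_isGreatest_of_finite {s : Set ℝ} (h : s.Finite) (hn : s.Nonempty) :
    ∃ v, IsGreatest s v :=
  ⟨h.toFinset.max' (by simpa using hn), by
    constructor
    · simpa using h.toFinset.max'_mem (by simpa using hn)
    · intro x hx; exact Finset.le_max' _ _ (by simpa using hx)⟩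

lemma lpeak_set_finite (a : ℕ → ℝ) (lo hi α : ℕ) :
    {v' | ∃ l i, IncSub a lo hi l ∧ l.length = α ∧ l.getLast? = some i ∧ v' = a i}.Finite := by
  apply Set.Finite.subset ((Set.finite_Icc lo hi).image a)
  rintro v ⟨l, i, hl, -, hlast, rfl⟩
  exact ⟨i, Set.mem_Icc.2 (hl.2.1 i (List.mem_of_mem_getLast? hlast)), rfl⟩

lemma rbase_set_finite (a : ℕ → ℝ) (lo hi β : ℕ) :
    {v' | ∃ l i, IncSub a lo hi l ∧ l.length = β ∧ l.head? = some i ∧ v' = a i}.Finite := by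
  apply Set.Finite.subset ((Set.finite_Icc lo hi).image a)
  rintro v ⟨l, i, hl, -, hhead, rfl⟩
  exact ⟨i, Set.mem_Icc.2 (hl.2.1 i (List.mem_of_mem_head? hhead)), rfl⟩

theorem stmt6 (n : ℕ) (a : ℕ → ℝ)
    (hinj : ∀ i ∈ Finset.Icc 1 n, ∀ j ∈ Finset.Icc 1 n, a i = a j → i = j)
    (x1 xs x2 : ℕ) (hx1 : 1 ≤ x1) (hx1s : x1 ≤ xs) (hsx2 : xs < x2) (hx2 : x2 ≤ n)
    (T : ℕ)
    (hT : IsGreatest {t | ∃ l, IncSub a x1 x2 l ∧ l.length = t} T) :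
    IsGreatest
      ({α | 1 ≤ α ∧ ∃ v, LPeak a x1 xs α v} ∪
       {β | 1 ≤ β ∧ ∃ v, RBase a xs x2 β v} ∪
       {t | ∃ α β vL vR, LPeak a x1 xs α vL ∧ RBase a xs x2 β vR ∧ vL < vR ∧ t = α + β}) T := by
  have hT1 : 1 ≤ T := hT.2 ⟨[x1], ⟨List.isChain_singleton _, by
    simp only [List.mem_singleton]
    rintro i rfl
    exact ⟨le_rfl, hx1s.trans hsx2.le⟩, List.isChain_singleton _⟩, rfl⟩
  constructor
  · -- membership
    obtain ⟨l, hl, hlen⟩ := hT.1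
    set p : ℕ → Bool := fun i => decide (i ≤ xs) with hp
    set l1 := l.takeWhile p with hl1
    set l2 := l.dropWhile p with hl2
    have heq : l1 ++ l2 = l := List.takeWhile_append_dropWhile
    have h1mem : ∀ i ∈ l1, i ≤ xs := fun i h => by
      simpa [hp] using List.mem_takeWhile_imp h
    rw [← heq] at hl hlen
    obtain ⟨hcl, hbnd, hcv⟩ := hl
    obtain ⟨hc1, hc2, hlink⟩ := List.isChain_append.1 hcl
    rw [List.map_append] at hcv
    obtain ⟨hv1, hv2, hvlink⟩ := List.isChain_append.1 hcv
    have h2mem : ∀ i ∈ l2, xs < i := by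
      intro i hmem
      have hne : l2 ≠ [] := List.ne_nil_of_mem hmem
      have hhd : xs < l2.head hne := by
        have := List.head_dropWhile_not p (l := l) (by rw [← hl2]; exact hne)
        simp only [hp, decide_eq_false_iff_not, not_le] at this
        exact this
      rw [← List.cons_head_tail hne] at hmem
      rcases List.mem_cons.1 hmem with h | h
      · exact h ▸ hhd
      · have hpw : List.Pairwise (· < ·) (l2.head hne :: l2.tail) := by
          rw [List.cons_head_tail]
          exact List.isChain_iff_pairwise.1 hc2
        exact hhd.trans (List.rel_of_pairwise_cons hpw h)
    have hI2 : IncSub a (xs + 1) x2 l2 :=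
      ⟨hc2, fun i h => ⟨h2mem i h, (hbnd i (List.mem_append_right _ h)).2⟩, hv2⟩
    have hI1 : IncSub a x1 xs l1 :=
      ⟨hc1, fun i h => ⟨(hbnd i (List.mem_append_left _ h)).1, h1mem i h⟩, hv1⟩
    rcases eq_or_ne l1 [] with h1e | h1ne
    · -- all in right part
      have h2ne : l2 ≠ [] := by
        intro h2e
        rw [h1e, h2e] at hlen
        simp at hlen; omega
      have hnonempty : {v' | ∃ l i, IncSub a (xs + 1) x2 l ∧ l.length = T ∧
          l.head? = some i ∧ v' = a i}.Nonempty := by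
        refine ⟨a (l2.head h2ne), l2, l2.head h2ne, hI2, ?_, List.head?_eq_head h2ne, rfl⟩
        simpa [h1e] using hlen
      obtain ⟨v, hv⟩ := exists_isGreatest_of_finite (rbase_set_finite a _ _ _) hnonempty
      exact Or.inl (Or.inr ⟨hT1, v, hv⟩)
    · rcases eq_or_ne l2 [] with h2e | h2ne
      · have hnonempty : {v' | ∃ l i, IncSub a x1 xs l ∧ l.length = T ∧
            l.getLast? = some i ∧ v' = a i}.Nonempty := by
          refine ⟨a (l1.getLast h1ne), l1, l1.getLast h1ne, hI1, ?_,
            List.getLast?_eq_getLast h1ne, rfl⟩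
          simpa [h2e] using hlen
        obtain ⟨v, hv⟩ := exists_isLeast_of_finite (lpeak_set_finite a _ _ _) hnonempty
        exact Or.inl (Or.inl ⟨hT1, v, hv⟩)
      · -- both nonempty
        set i0 := l1.getLast h1ne
        set j0 := l2.head h2ne
        obtain ⟨vL, hL⟩ := exists_isLeast_of_finite (lpeak_set_finite a x1 xs l1.length)
          ⟨a i0, l1, i0, hI1, rfl, List.getLast?_eq_getLast h1ne, rfl⟩
        obtain ⟨vR, hR⟩ := exists_isGreatest_of_finite (rbase_set_finite a (xs+1) x2 l2.length)
          ⟨a j0, l2, j0, hI2, rfl, List.head?_eq_head h2ne, rfl⟩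
        have hvL : vL ≤ a i0 :=
          hL.2 ⟨l1, i0, hI1, rfl, List.getLast?_eq_getLast h1ne, rfl⟩
        have hvR : a j0 ≤ vR :=
          hR.2 ⟨l2, j0, hI2, rfl, List.head?_eq_head h2ne, rfl⟩
        have hij : a i0 < a j0 := by
          apply hvlink
          · rw [List.getLast?_map, List.getLast?_eq_getLast h1ne]; rfl
          · rw [List.head?_map, List.head?_eq_head h2ne]; rfl
        refine Or.inr ⟨l1.length, l2.length, vL, vR, hL, hR,
          lt_of_le_of_lt hvL (lt_of_lt_of_le hij hvR), ?_⟩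
        rw [← hlen, List.length_append]
  · -- upper bound
    rintro t ((⟨h1, v, hv⟩ | ⟨h1, v, hv⟩) | ⟨α, β, vL, vR, hL, hR, hlt, rfl⟩)
    · obtain ⟨l, i, hl, hlen, -, -⟩ := hv.1
      exact hT.2 ⟨l, incSub_mono le_rfl hsx2.le hl, hlen⟩
    · obtain ⟨l, i, hl, hlen, -, -⟩ := hv.1
      exact hT.2 ⟨l, incSub_mono (by omega) le_rfl hl, hlen⟩
    · obtain ⟨l, i, hl, hlenl, hlast, rfl⟩ := hL.1
      obtain ⟨r, j, hr, hlenr, hhead, rfl⟩ := hR.1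
      have hIncSub : IncSub a x1 x2 (l ++ r) := by
        refine ⟨?_, ?_, ?_⟩
        · show List.IsChain _ (_ ++ _)
          rw [List.isChain_append]
          refine ⟨hl.1, hr.1, ?_⟩
          intro x hx y hy
          rw [hlast, Option.mem_def, Option.some_inj] at hx
          rw [hhead, Option.mem_def, Option.some_inj] at hy
          subst hx; subst hy
          have h1 : i ≤ xs := (hl.2.1 i (List.mem_of_mem_getLast? (by rw [hlast]; rfl))).2
          have h2 : xs + 1 ≤ j := (hr.2.1 j (List.mem_of_mem_head? (by rw [hhead]; rfl))).1
          omega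
        · intro k hk
          rcases List.mem_append.1 hk with h | h
          · exact ⟨(hl.2.1 k h).1, (hl.2.1 k h).2.trans hsx2.le⟩
          · exact ⟨le_trans (by omega) (hr.2.1 k h).1, (hr.2.1 k h).2⟩
        · rw [List.map_append]
          show List.IsChain _ (_ ++ _)
          rw [List.isChain_append]
          refine ⟨hl.2.2, hr.2.2, ?_⟩
          intro x hx y hy
          rw [List.getLast?_map, hlast, Option.map_some, Option.mem_def, Option.some_inj] at hx
          rw [List.head?_map, hhead, Option.map_some, Option.mem_def, Option.some_inj] at hy
          subst hx; subst hy
          exact hlt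
      exact hT.2 ⟨l ++ r, hIncSub, by rw [List.length_append, hlenl, hlenr]⟩
end

section
/- Let P be a finite set of points in the plane, q an axis-aligned rectangle, and p_i ∈ P ∩ q. With weights w(p_j) defined as the maximum length of an increasing chain in P ∩ NE(p_i) starting at p_i and ending at p_j, we have: LIS(P ∩ q ∩ NE(p_i)) = max{ w(p_j) : p_j ∈ P ∩ q ∩ NE(p_i) and a chain from p_i to p_j exists }. -/
def Inc2 (p q : ℝ × ℝ) : Prop := p.1 < q.1 ∧ p.2 < q.2

def InRect (x1 x2 y1 y2 : ℝ) (p : ℝ × ℝ) : Prop :=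
  x1 ≤ p.1 ∧ p.1 ≤ x2 ∧ y1 ≤ p.2 ∧ p.2 ≤ y2

def ChainIn (T : Set (ℝ × ℝ)) (l : List (ℝ × ℝ)) : Prop :=
  l.Chain' Inc2 ∧ ∀ p ∈ l, p ∈ T

def NE2 (p : ℝ × ℝ) : Set (ℝ × ℝ) := {r | p.1 ≤ r.1 ∧ p.2 ≤ r.2}

theorem stmt14 (P : Finset (ℝ × ℝ))
    (hdist : ∀ p ∈ P, ∀ q ∈ P, p ≠ q → p.1 ≠ q.1 ∧ p.2 ≠ q.2)
    (x1 x2 y1 y2 : ℝ) (pi : ℝ × ℝ)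
    (hpiP : pi ∈ P) (hpiq : InRect x1 x2 y1 y2 pi)
    (w : (ℝ × ℝ) → ℕ)
    (hw : ∀ pj, (∃ l, ChainIn {x | x ∈ P ∧ x ∈ NE2 pi} l ∧
        l.head? = some pi ∧ l.getLast? = some pj) →
      IsGreatest {t | ∃ l, ChainIn {x | x ∈ P ∧ x ∈ NE2 pi} l ∧
        l.head? = some pi ∧ l.getLast? = some pj ∧ l.length = t} (w pj))
    (L : ℕ)
    (hL : IsGreatest {t | ∃ l, ChainIn {x | x ∈ P ∧ InRect x1 x2 y1 y2 x ∧ x ∈ NE2 pi} l ∧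
      l ≠ [] ∧ l.length = t} L) :
    IsGreatest {t | ∃ pj, (pj ∈ P ∧ InRect x1 x2 y1 y2 pj ∧ pj ∈ NE2 pi) ∧
      (∃ l, ChainIn {x | x ∈ P ∧ x ∈ NE2 pi} l ∧
        l.head? = some pi ∧ l.getLast? = some pj) ∧ t = w pj} L := by
  -- every element of a chain is coordinatewise ≤ the last element
  have aux_le_last : ∀ (l : List (ℝ × ℝ)), l.Chain' Inc2 → ∀ pj, l.getLast? = some pj →
      ∀ p ∈ l, p.1 ≤ pj.1 ∧ p.2 ≤ pj.2 := by
    intro l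
    induction l with
    | nil => simp
    | cons a t ih =>
      intro hc pj hlast p hp
      cases t with
      | nil =>
        simp at hlast hp
        subst hlast; subst hp
        exact ⟨le_refl _, le_refl _⟩
      | cons b t' =>
        simp only [List.Chain', List.isChain_cons_cons] at hc
        have hlast' : (b :: t').getLast? = some pj := by
          rwa [List.getLast?_cons_cons] at hlast
        rcases List.mem_cons.mp hp with rfl | hp'
        · have hb := ih hc.2 pj hlast' b List.mem_cons_self
          exact ⟨le_of_lt (lt_of_lt_of_le hc.1.1 hb.1),
                 le_of_lt (lt_of_lt_of_le hc.1.2 hb.2)⟩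
        · exact ih hc.2 pj hlast' p hp'
  have key : ∀ pj, InRect x1 x2 y1 y2 pj →
      (∃ l, ChainIn {x | x ∈ P ∧ x ∈ NE2 pi} l ∧
        l.head? = some pi ∧ l.getLast? = some pj) → w pj ≤ L := by
    intro pj hrect hex
    obtain ⟨l', ⟨hc', hm'⟩, hh', hl', hlen'⟩ := (hw pj hex).1
    apply hL.2
    refine ⟨l', ⟨hc', fun p hp => ?_⟩, fun h => by simp [h] at hh', hlen'⟩
    have hpm := hm' p hp
    have hle := aux_le_last l' hc' pj hl' p hp
    exact ⟨hpm.1, ⟨le_trans hpiq.1 hpm.2.1, le_trans hle.1 hrect.2.1,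
      le_trans hpiq.2.2.1 hpm.2.2, le_trans hle.2 hrect.2.2.2⟩, hpm.2⟩
  obtain ⟨l, ⟨hchain, hmem⟩, hne, hlen⟩ := hL.1
  obtain ⟨h0, t, rfl⟩ := List.exists_cons_of_ne_nil hne
  have hh0 := hmem h0 List.mem_cons_self
  have hh0pi : h0 = pi := by
    by_contra hh
    have hinc : Inc2 pi h0 := by
      have hd := hdist pi hpiP h0 hh0.1 (fun e => hh e.symm)
      exact ⟨lt_of_le_of_ne hh0.2.2.1 hd.1, lt_of_le_of_ne hh0.2.2.2 hd.2⟩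
    have : (pi :: h0 :: t).length ≤ L := by
      apply hL.2
      refine ⟨pi :: h0 :: t, ⟨List.isChain_cons_cons.mpr ⟨hinc, hchain⟩, ?_⟩,
        List.cons_ne_nil _ _, rfl⟩
      intro p hp
      rcases List.mem_cons.mp hp with rfl | hp'
      · exact ⟨hpiP, hpiq, le_refl _, le_refl _⟩
      · exact hmem p hp'
    simp [← hlen] at this
  subst h0
  set pj := (pi :: t).getLast (List.cons_ne_nil _ _) with hpjdef
  have hpjl : (pi :: t).getLast? = some pj := List.getLast?_eq_getLast _
  have hpjmem : pj ∈ (pi :: t) := List.getLast_mem _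
  have hpjS := hmem pj hpjmem
  have hex : ∃ l, ChainIn {x | x ∈ P ∧ x ∈ NE2 pi} l ∧
      l.head? = some pi ∧ l.getLast? = some pj :=
    ⟨pi :: t, ⟨hchain, fun p hp => ⟨(hmem p hp).1, (hmem p hp).2.2⟩⟩, rfl, hpjl⟩
  have hLle : L ≤ w pj := (hw pj hex).2 ⟨pi :: t,
    ⟨hchain, fun p hp => ⟨(hmem p hp).1, (hmem p hp).2.2⟩⟩, rfl, hpjl, hlen⟩
  have hwle : w pj ≤ L := key pj hpjS.2.1 hex
  constructor
  · exact ⟨pj, ⟨hpjS.1, hpjS.2.1, hpjS.2.2⟩, hex, (le_antisymm hwle hLle).symm⟩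
  · rintro s ⟨pj', ⟨_, hpj'q, _⟩, hex', rfl⟩
    exact key pj' hpj'q hex'
end

section
/- With the construction a_i = z_i + f_i · n (where z_i ∈ {1,...,n} and f_i counts prior occurrences of z_i), color each index i by z_i. Then for any contiguous range [x1, x2], the maximum length of a monochromatic increasing subsequence of (a_i) within [x1, x2] equals the maximum multiplicity (mode frequency) of any value in (z_{x1}, ..., z_{x2}); moreover any color achieving this maximum monochromatic LIS is a mode of the range. -/
/-- `priorCount z i` is the number of indices `j < i` (with `j ≥ 1`) such that `z j = z i`. -/
def priorCount (z : ℕ → ℕ) (i : ℕ) : ℕ :=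
  ((Finset.Ico 1 i).filter fun j => z j = z i).card

/-- Multiplicity of the value `v` in the range of indices `[x1, x2]`. -/
def mult (z : ℕ → ℕ) (x1 x2 v : ℕ) : ℕ :=
  ((Finset.Icc x1 x2).filter fun i => z i = v).card

/-- A monochromatic increasing subsequence of color `v` within `[x1, x2]`:
strictly increasing indices, all of color `v`, with strictly increasing `a`-values. -/
def MonoSub (z a : ℕ → ℕ) (x1 x2 v : ℕ) (l : List ℕ) : Prop :=
  l.Chain' (· < ·) ∧ (∀ i ∈ l, x1 ≤ i ∧ i ≤ x2 ∧ z i = v) ∧ (l.map a).Chain' (· < ·)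

lemma priorCount_lt (z : ℕ → ℕ) {i j : ℕ} (h1 : 1 ≤ i) (hij : i < j) (hz : z i = z j) :
    priorCount z i < priorCount z j := by
  unfold priorCount
  rw [hz]
  apply Finset.card_lt_card
  constructor
  · intro k hk
    simp only [Finset.mem_filter, Finset.mem_Ico] at *
    exact ⟨⟨hk.1.1, hk.1.2.trans hij⟩, hk.2⟩
  · intro hsub
    have : i ∈ (Finset.Ico 1 j).filter fun k => z k = z j := by
      simp [Finset.mem_filter, Finset.mem_Ico, h1, hij, hz]
    have := hsub this
    simp [Finset.mem_filter, Finset.mem_Ico] at this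

lemma length_le_mult (z a : ℕ → ℕ) (x1 x2 v : ℕ) (l : List ℕ)
    (h : MonoSub z a x1 x2 v l) : l.length ≤ mult z x1 x2 v := by
  obtain ⟨hc, hm, -⟩ := h
  have hnd : l.Nodup := (List.isChain_iff_pairwise.mp hc).imp ne_of_lt
  have hsub : l.toFinset ⊆ (Finset.Icc x1 x2).filter fun i => z i = v := by
    intro i hi
    simp only [List.mem_toFinset] at hi
    obtain ⟨h1, h2, h3⟩ := hm i hi
    simp [Finset.mem_filter, Finset.mem_Icc, h1, h2, h3]
  calc l.length = l.toFinset.card := (List.toFinset_card_of_nodup hnd).symm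
    _ ≤ _ := Finset.card_le_card hsub

lemma exists_monosub (n : ℕ) (hn : 1 ≤ n) (z a : ℕ → ℕ)
    (ha : ∀ i, a i = z i + priorCount z i * n) (x1 x2 v : ℕ) (hx1 : 1 ≤ x1) :
    ∃ l, MonoSub z a x1 x2 v l ∧ l.length = mult z x1 x2 v := by
  set s := (Finset.Icc x1 x2).filter (fun i => z i = v) with hs
  have hmem : ∀ i ∈ s.sort (· ≤ ·), x1 ≤ i ∧ i ≤ x2 ∧ z i = v := by
    intro i hi
    rw [Finset.mem_sort] at hi
    simp only [hs, Finset.mem_filter, Finset.mem_Icc] at hi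
    exact ⟨hi.1.1, hi.1.2, hi.2⟩
  have hsorted : (s.sort (· ≤ ·)).Pairwise (· < ·) := (Finset.sortedLT_sort s).pairwise
  refine ⟨s.sort (· ≤ ·), ⟨List.isChain_iff_pairwise.mpr hsorted, hmem, ?_⟩, by
    rw [Finset.length_sort]; rfl⟩
  have hp : (s.sort (· ≤ ·)).Pairwise fun i j => a i < a j := by
    refine List.Pairwise.imp_of_mem ?_ hsorted
    intro i j hi hj hij
    obtain ⟨hi1, -, hiz⟩ := hmem i hi
    obtain ⟨-, -, hjz⟩ := hmem j hj
    have hpc : priorCount z i < priorCount z j :=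
      priorCount_lt z (le_trans hx1 hi1) hij (hiz.trans hjz.symm)
    rw [ha i, ha j, hiz, hjz]
    have : priorCount z i * n < priorCount z j * n :=
      (Nat.mul_lt_mul_right hn).mpr hpc
    omega
  refine (List.isChain_map a).mpr ?_
  exact hp.isChain

theorem stmt16 (n : ℕ) (hn : 1 ≤ n) (z : ℕ → ℕ)
    (hz : ∀ i ∈ Finset.Icc 1 n, z i ∈ Finset.Icc 1 n)
    (a : ℕ → ℕ) (ha : ∀ i, a i = z i + priorCount z i * n)
    (x1 x2 : ℕ) (hx1 : 1 ≤ x1) (hx12 : x1 ≤ x2) (hx2 : x2 ≤ n)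
    (M : ℕ) (hM : IsGreatest {t | ∃ v, t = mult z x1 x2 v} M) :
    IsGreatest {t | ∃ v l, MonoSub z a x1 x2 v l ∧ l.length = t} M ∧
      ∀ v l, MonoSub z a x1 x2 v l → l.length = M →
        IsGreatest {t | ∃ w, t = mult z x1 x2 w} (mult z x1 x2 v) := by
  obtain ⟨⟨v0, hv0⟩, hub⟩ := hM
  constructor
  · constructor
    · obtain ⟨l, hl, hlen⟩ := exists_monosub n hn z a ha x1 x2 v0 hx1
      exact ⟨v0, l, hl, by rw [hlen, hv0]⟩
    · rintro t ⟨v, l, hl, rfl⟩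
      exact le_trans (length_le_mult z a x1 x2 v l hl) (hub ⟨v, rfl⟩)
  · intro v l hl hlen
    have h1 : M ≤ mult z x1 x2 v := hlen ▸ length_le_mult z a x1 x2 v l hl
    have h2 : mult z x1 x2 v ≤ M := hub ⟨v, rfl⟩
    have heq : mult z x1 x2 v = M := le_antisymm h2 h1
    exact ⟨⟨v, rfl⟩, heq ▸ hub⟩
end

section
/- Let P be a finite set of points in the plane partitioned by colors into sets P_c, and let q be an axis-aligned rectangle. Suppose for each color c and each pair (p_i, p_j) of points of P_c with p_i strictly dominated by p_j (both coordinates smaller), we associate the rectangle R_c(i,j) with corners p_i and p_j and weight equal to the maximum chain length in P_c ∩ R_c(i,j) among chains starting at p_i and ending at p_j. Then max over colors c of LIS(P_c ∩ q) equals the maximum weight over all rectangles R_c(i,j) contained in q, provided at least one color has a point in q (a single point p ∈ P_c ∩ q corresponds to the degenerate rectangle R_c(p,p) of weight 1). -/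
instance : IsTrans (ℝ × ℝ) Inc2 := ⟨fun _ _ _ h1 h2 => ⟨h1.1.trans h2.1, h1.2.trans h2.2⟩⟩

lemma pairwise_head_rel {α : Type*} {R : α → α → Prop} {l : List α} (h : l.Pairwise R)
    {a : α} (ha : l.head? = some a) : ∀ x ∈ l, x = a ∨ R a x := by
  cases l with
  | nil => simp
  | cons b t =>
    simp only [List.head?_cons, Option.some.injEq] at ha
    subst ha
    intro x hx
    rcases List.mem_cons.1 hx with h' | h'
    · exact Or.inl h'
    · exact Or.inr ((List.pairwise_cons.1 h).1 x h')

lemma chain_head_le {l : List (ℝ × ℝ)} (hl : l.Chain' Inc2) {a x : ℝ × ℝ}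
    (ha : l.head? = some a) (hx : x ∈ l) : a.1 ≤ x.1 ∧ a.2 ≤ x.2 := by
  rcases pairwise_head_rel (List.isChain_iff_pairwise.1 hl) ha x hx with h | h
  · subst h; exact ⟨le_refl _, le_refl _⟩
  · exact ⟨h.1.le, h.2.le⟩

lemma chain_le_last {l : List (ℝ × ℝ)} (hl : l.Chain' Inc2) {b x : ℝ × ℝ}
    (hb : l.getLast? = some b) (hx : x ∈ l) : x.1 ≤ b.1 ∧ x.2 ≤ b.2 := by
  have hc : l.reverse.Chain' (flip Inc2) := List.isChain_reverse.mpr hl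
  have inst : IsTrans (ℝ × ℝ) (flip Inc2) :=
    ⟨fun _ _ _ h1 h2 => ⟨h2.1.trans h1.1, h2.2.trans h1.2⟩⟩
  have hp : l.reverse.Pairwise (flip Inc2) := List.isChain_iff_pairwise.1 hc
  have hb' : l.reverse.head? = some b := by rw [List.head?_reverse]; exact hb
  rcases pairwise_head_rel hp hb' x (List.mem_reverse.2 hx) with h | h
  · subst h; exact ⟨le_refl _, le_refl _⟩
  · exact ⟨h.1.le, h.2.le⟩

lemma chain_head_last_rel {l : List (ℝ × ℝ)} (hl : l.Chain' Inc2) {a b : ℝ × ℝ}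
    (ha : l.head? = some a) (hb : l.getLast? = some b) :
    a = b ∨ (a.1 < b.1 ∧ a.2 < b.2) := by
  cases l with
  | nil => simp at ha
  | cons a t =>
    simp only [List.head?_cons, Option.some.injEq] at ha; subst ha
    cases t with
    | nil =>
      simp only [List.getLast?_singleton, Option.some.injEq] at hb
      exact Or.inl hb
    | cons d t' =>
      have hbmem : b ∈ d :: t' := by
        have h1 : (a :: d :: t').getLast? = some ((d :: t').getLast (by simp)) := by
          rw [List.getLast?_eq_getLast (l := a :: d :: t') (by simp), List.getLast_cons (by simp)]
        rw [h1] at hb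
        have hm := List.getLast_mem (l := d :: t') (by simp)
        rw [Option.some_inj.1 hb] at hm
        exact hm
      exact Or.inr ((List.pairwise_cons.1 (List.isChain_iff_pairwise.1 hl)).1 b hbmem)

theorem stmt17 {ι : Type*} (P : Finset (ℝ × ℝ)) (color : (ℝ × ℝ) → ι)
    (hdist : ∀ p ∈ P, ∀ r ∈ P, p ≠ r → p.1 ≠ r.1 ∧ p.2 ≠ r.2)
    (x1 x2 y1 y2 : ℝ)
    (w : (ℝ × ℝ) → (ℝ × ℝ) → ℕ)
    (hw : ∀ pi ∈ P, ∀ pj ∈ P, color pi = color pj →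
      (pi = pj ∨ (pi.1 < pj.1 ∧ pi.2 < pj.2)) →
      IsGreatest {t | ∃ l, ChainIn {x | x ∈ P ∧ color x = color pi ∧
          x ∈ Set.Icc pi.1 pj.1 ×ˢ Set.Icc pi.2 pj.2} l ∧
        l.head? = some pi ∧ l.getLast? = some pj ∧ l.length = t} (w pi pj))
    (hq : ∃ p ∈ P, InRect x1 x2 y1 y2 p)
    (M M' : ℕ)
    (hM : IsGreatest {t | ∃ (c : ι) (l : List (ℝ × ℝ)),
      ChainIn {x | x ∈ P ∧ color x = c ∧ InRect x1 x2 y1 y2 x} l ∧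
      l ≠ [] ∧ l.length = t} M)
    (hM' : IsGreatest {t | ∃ pi ∈ P, ∃ pj ∈ P, color pi = color pj ∧
      (pi = pj ∨ (pi.1 < pj.1 ∧ pi.2 < pj.2)) ∧
      (Set.Icc pi.1 pj.1 ×ˢ Set.Icc pi.2 pj.2 ⊆ Set.Icc x1 x2 ×ˢ Set.Icc y1 y2) ∧
      t = w pi pj} M') :
    M = M' := by
  obtain ⟨hMmem, hMub⟩ := hM
  obtain ⟨hM'mem, hM'ub⟩ := hM'
  apply le_antisymm
  · -- M ≤ M'
    obtain ⟨c, l, ⟨hchain, hmem⟩, hne, hlen⟩ := hMmem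
    obtain ⟨pi, ha⟩ := Option.ne_none_iff_exists'.1 (mt List.head?_eq_none_iff.1 hne)
    obtain ⟨pj, hb⟩ := Option.ne_none_iff_exists'.1 (mt List.getLast?_eq_none_iff.1 hne)
    have hpi_mem : pi ∈ l := List.mem_of_mem_head? (by rw [ha]; rfl)
    have hpj_mem : pj ∈ l := List.mem_of_mem_getLast? (by rw [hb]; rfl)
    obtain ⟨hpiP, hpic, hpiq⟩ := hmem pi hpi_mem
    obtain ⟨hpjP, hpjc, hpjq⟩ := hmem pj hpj_mem
    have hrel := chain_head_last_rel hchain ha hb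
    have hcol : color pi = color pj := by rw [hpic, hpjc]
    have hwgt := hw pi hpiP pj hpjP hcol hrel
    have hlM : l.length ≤ w pi pj := by
      apply hwgt.2
      refine ⟨l, ⟨hchain, ?_⟩, ha, hb, rfl⟩
      intro x hx
      obtain ⟨hxP, hxc, hxq⟩ := hmem x hx
      have h1 := chain_head_le hchain ha hx
      have h2 := chain_le_last hchain hb hx
      exact ⟨hxP, by rw [hxc, hpic], ⟨h1.1, h2.1⟩, ⟨h1.2, h2.2⟩⟩
    have hsub : Set.Icc pi.1 pj.1 ×ˢ Set.Icc pi.2 pj.2 ⊆ Set.Icc x1 x2 ×ˢ Set.Icc y1 y2 :=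
      Set.prod_mono (Set.Icc_subset_Icc hpiq.1 hpjq.2.1)
        (Set.Icc_subset_Icc hpiq.2.2.1 hpjq.2.2.2)
    have : w pi pj ≤ M' := hM'ub ⟨pi, hpiP, pj, hpjP, hcol, hrel, hsub, rfl⟩
    omega
  · -- M' ≤ M
    obtain ⟨pi, hpiP, pj, hpjP, hcol, hrel, hsub, hM'eq⟩ := hM'mem
    obtain ⟨l, ⟨hchain, hmem⟩, ha, hb, hlen⟩ := (hw pi hpiP pj hpjP hcol hrel).1
    have hne : l ≠ [] := by intro h; rw [h] at ha; simp at ha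
    have : l.length ≤ M := by
      apply hMub
      refine ⟨color pi, l, ⟨hchain, ?_⟩, hne, rfl⟩
      intro x hx
      obtain ⟨hxP, hxc, hxq⟩ := hmem x hx
      have := hsub hxq
      exact ⟨hxP, hxc, this.1.1, this.1.2, this.2.1, this.2.2⟩
    omega
end
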